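/- For every τ ∈ ℝ and every q ∈ ℝᴺ, the 1×1 matrix X (I₃ ⊗ M) Xᵀ equals 6·qᵀ(τΣ₁ + (τ³/6)Σ₂ + (13τ⁵/360)Σ₃)q, where M := (I₂ ⊗ qᵀ) Qˣ (I₂ ⊗ q) is a 2×2 matrix and X is the 1×6 row matrix [C(A² − 3A + 3I₂), C(A − 3I₂), C]. -/

import Mathlib

open Matrix Kronecker

theorem stmt_1 (N : ℕ) (τ : ℝ) (q : Fin N → ℝ)
    (S1 S2 S3 : Matrix (Fin N) (Fin N) ℝ)
    (A : Matrix (Fin 2) (Fin 2) ℝ) (hA : A = !![1, τ; 0, 1])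
    (C : Matrix (Fin 1) (Fin 2) ℝ) (hC : C = !![1, 0])
    (qrow : Matrix (Fin 1) (Fin N) ℝ) (hqrow : qrow = Matrix.of (fun _ j => q j))
    (qcol : Matrix (Fin N) (Fin 1) ℝ) (hqcol : qcol = Matrix.of (fun j _ => q j))
    (Qx : Matrix (Fin 2 × Fin N) (Fin 2 × Fin N) ℝ)
    (hQx : Qx = !![(1:ℝ), 0; 0, 0] ⊗ₖ (τ • S1 + (τ^3/3) • S2 + (τ^5/20) • S3)
        + !![(0:ℝ), 1; 0, 0] ⊗ₖ ((τ^2/2) • S2 + (τ^4/8) • S3)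
        + !![(0:ℝ), 0; 1, 0] ⊗ₖ ((τ^2/2) • S2 + (τ^4/8) • S3)
        + !![(0:ℝ), 0; 0, 1] ⊗ₖ (τ • S2 + (τ^3/3) • S3))
    (M : Matrix (Fin 2) (Fin 2) ℝ)
    (hM : M = Matrix.of (fun i j =>
      (((1 : Matrix (Fin 2) (Fin 2) ℝ) ⊗ₖ qrow) * Qx *
        ((1 : Matrix (Fin 2) (Fin 2) ℝ) ⊗ₖ qcol)) (i, 0) (j, 0)))
    (X : Matrix (Fin 1) (Fin 3 × Fin 2) ℝ)
    (hX : X = Matrix.of (fun i jp =>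
      ![C * (A * A - (3:ℝ) • A + (3:ℝ) • 1), C * (A - (3:ℝ) • 1), C] jp.1 i jp.2)) :
    X * ((1 : Matrix (Fin 3) (Fin 3) ℝ) ⊗ₖ M) * Xᵀ =
      Matrix.of (fun _ _ =>
        6 * (q ⬝ᵥ ((τ • S1 + (τ^3/6) • S2 + (13*τ^5/360) • S3) *ᵥ q))) := by
  -- quadratic form scalars
  have hq : ∀ G : Matrix (Fin N) (Fin N) ℝ, (qrow * G * qcol) 0 0 = q ⬝ᵥ G *ᵥ q := by
    intro G
    subst hqrow hqcol
    simp [mul_apply, dotProduct, mulVec, Finset.mul_sum, Finset.sum_mul]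
    rw [Finset.sum_comm]
    exact Finset.sum_congr rfl fun a _ => Finset.sum_congr rfl fun b _ => by ring
  set a := q ⬝ᵥ S1 *ᵥ q with ha
  set b := q ⬝ᵥ S2 *ᵥ q with hb
  set c := q ⬝ᵥ S3 *ᵥ q with hc
  have hM' : M = !![τ*a + τ^3/3*b + τ^5/20*c, τ^2/2*b + τ^4/8*c;
                    τ^2/2*b + τ^4/8*c, τ*b + τ^3/3*c] := by
    rw [hM, hQx]
    ext i j
    simp only [Matrix.of_apply, Matrix.mul_add, Matrix.add_mul, Matrix.add_apply]
    simp only [← Matrix.mul_kronecker_mul, Matrix.one_mul, Matrix.mul_one,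
      Matrix.kroneckerMap_apply]
    rw [hq, hq, hq]
    have h1 : q ⬝ᵥ (τ • S1 + (τ^3/3) • S2 + (τ^5/20) • S3) *ᵥ q
        = τ*a + τ^3/3*b + τ^5/20*c := by
      simp [add_mulVec, smul_mulVec, dotProduct_add, dotProduct_smul,
        smul_eq_mul, ha, hb, hc]
    have h2 : q ⬝ᵥ ((τ^2/2) • S2 + (τ^4/8) • S3) *ᵥ q = τ^2/2*b + τ^4/8*c := by
      simp [add_mulVec, smul_mulVec, dotProduct_add, dotProduct_smul,
        smul_eq_mul, hb, hc]
    have h3 : q ⬝ᵥ (τ • S2 + (τ^3/3) • S3) *ᵥ q = τ*b + τ^3/3*c := by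
      simp [add_mulVec, smul_mulVec, dotProduct_add, dotProduct_smul,
        smul_eq_mul, hb, hc]
    simp only [h1, h2, h3]
    fin_cases i <;> fin_cases j <;> simp
  have hR : q ⬝ᵥ ((τ • S1 + (τ^3/6) • S2 + (13*τ^5/360) • S3) *ᵥ q)
      = τ*a + τ^3/6*b + 13*τ^5/360*c := by
    simp [add_mulVec, smul_mulVec, dotProduct_add, dotProduct_smul,
      smul_eq_mul, ha, hb, hc]
  ext i j
  fin_cases i; fin_cases j
  simp only [Matrix.of_apply, hR]
  rw [hX, hA, hC, hM']
  simp [mul_apply, Fintype.sum_prod_type, Fin.sum_univ_three, Fin.sum_univ_two,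
    kroneckerMap_apply, one_apply, transpose_apply, Matrix.smul_apply, Matrix.sub_apply,
    Matrix.add_apply, Matrix.vecMul, dotProduct, Matrix.one_fin_two, smul_eq_mul]
  ring
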